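/- Let g be the strictly upper triangular n×n complex matrices, α = ε_i − ε_j with i < j, and f ∈ g* satisfying: f(E_{ij}) = 1; f(E_{rs}) = f(E_{is})·f(E_{rj}) whenever i < r < s < j; f(E_{rs}) = 0 for all other (r,s) with (r,s) ∉ S(α) = {(i,k) : i<k<j} ∪ {(k,j) : i<k<j}. Then f lies in the coadjoint orbit of e*_{ij}; explicitly, f = (∏_{k=i+1}^{j-1} exp(f(E_{ik})·ad*E_{kj}) ∏_{k=i+1}^{j-1} exp(−f(E_{kj})·ad*E_{ik}))·e*_{ij}. -/

import Mathlib

open Matrix Finset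

private lemma listProdAux {n : ℕ} (l : List (Fin n)) (M : Fin n → Matrix (Fin n) (Fin n) ℂ)
    (h : ∀ k ∈ l, ∀ k' ∈ l, M k * M k' = 0) :
    (l.map fun k => 1 + M k).prod = 1 + (l.map M).sum := by
  induction l with
  | nil => simp
  | cons k t ih =>
    rw [List.map_cons, List.prod_cons, List.map_cons, List.sum_cons,
      ih (fun a ha b hb => h a (List.mem_cons_of_mem _ ha) b (List.mem_cons_of_mem _ hb))]
    have hz : M k * (t.map M).sum = 0 := by
      rw [← List.sum_map_mul_left]
      refine List.sum_eq_zero fun x hx => ?_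
      obtain ⟨b, hb, rfl⟩ := List.mem_map.mp hx
      exact h k (List.mem_cons_self) b (List.mem_cons_of_mem _ hb)
    rw [add_mul, one_mul, mul_add, mul_one, hz, add_zero]
    abel

theorem stmt15 (n : ℕ) (i j : Fin n) (hij : i < j)
    (f : Matrix (Fin n) (Fin n) ℂ →ₗ[ℂ] ℂ)
    (h1 : f (single i j (1 : ℂ)) = 1)
    (h2 : ∀ r s : Fin n, i < r → r < s → s < j →
      f (single r s (1 : ℂ)) =
        f (single i s (1 : ℂ)) * f (single r j (1 : ℂ)))
    (h3 : ∀ r s : Fin n, r < s → (r, s) ≠ (i, j) →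
      ¬ (r = i ∧ i < s ∧ s < j) → ¬ (s = j ∧ i < r ∧ r < j) →
      ¬ (i < r ∧ r < s ∧ s < j) → f (single r s (1 : ℂ)) = 0) :
    ∀ x : Matrix (Fin n) (Fin n) ℂ, (∀ a b : Fin n, b ≤ a → x a b = 0) →
      f x =
        (let g : Matrix (Fin n) (Fin n) ℂ :=
          ((((Ioo i j).sort (· ≤ ·)).map fun k =>
              (1 + f (single i k (1 : ℂ)) • single k j (1 : ℂ))).prod) *
          ((((Ioo i j).sort (· ≤ ·)).map fun k =>
              (1 - f (single k j (1 : ℂ)) • single i k (1 : ℂ))).prod)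
        (g⁻¹ * x * g) i j) := by
  intro x hx
  obtain ⟨A, hA⟩ : ∃ A' : Matrix (Fin n) (Fin n) ℂ,
      A' = ∑ k ∈ Ioo i j, f (single i k (1 : ℂ)) • single k j (1 : ℂ) :=
    ⟨_, rfl⟩
  obtain ⟨B, hB⟩ : ∃ B' : Matrix (Fin n) (Fin n) ℂ,
      B' = ∑ k ∈ Ioo i j, f (single k j (1 : ℂ)) • single i k (1 : ℂ) :=
    ⟨_, rfl⟩
  obtain ⟨s, hs⟩ : ∃ s' : ℂ,
      s' = ∑ k ∈ Ioo i j, f (single k j (1 : ℂ)) * f (single i k (1 : ℂ)) :=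
    ⟨_, rfl⟩
  have memT : ∀ k : Fin n, k ∈ Ioo i j ↔ i < k ∧ k < j := fun k => Finset.mem_Ioo
  -- sorted-list sums equal finset sums
  have listsum : ∀ M : Fin n → Matrix (Fin n) (Fin n) ℂ,
      (((Ioo i j).sort (· ≤ ·)).map M).sum = ∑ k ∈ Ioo i j, M k := by
    intro M
    rw [← Finset.sum_map_toList]
    exact List.Perm.sum_eq (List.Perm.map M (Finset.sort_perm_toList _ _))
  have memSort : ∀ k ∈ (Ioo i j).sort (· ≤ ·), i < k ∧ k < j := by
    intro k hk
    exact (memT k).mp ((Finset.mem_sort _).mp hk)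
  -- two product computations
  have prodA : ((((Ioo i j).sort (· ≤ ·)).map fun k =>
      (1 + f (single i k (1 : ℂ)) • single k j (1 : ℂ)))).prod = 1 + A := by
    rw [listProdAux _ _ (fun k hk k' hk' => by
      have h2' := (memSort k' hk').2
      rw [Matrix.smul_mul, Matrix.mul_smul,
        Matrix.single_mul_single_of_ne (h := ne_of_gt h2'), smul_zero, smul_zero]),
      listsum, hA]
  have prodB : ((((Ioo i j).sort (· ≤ ·)).map fun k =>
      (1 - f (single k j (1 : ℂ)) • single i k (1 : ℂ)))).prod = 1 + (-B) := by
    have e : ∀ k : Fin n, (1 : Matrix (Fin n) (Fin n) ℂ)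
          - f (single k j (1 : ℂ)) • single i k (1 : ℂ)
        = 1 + (-(f (single k j (1 : ℂ)))) • single i k (1 : ℂ) := by
      intro k; rw [sub_eq_add_neg, neg_smul]
    simp only [e]
    rw [listProdAux _ _ (fun k hk k' hk' => by
      have h1' := (memSort k hk).1
      rw [Matrix.smul_mul, Matrix.mul_smul,
        Matrix.single_mul_single_of_ne (h := ne_of_gt h1'), smul_zero, smul_zero]),
      listsum, hB, ← Finset.sum_neg_distrib]
    congr 1
    exact Finset.sum_congr rfl fun k _ => neg_smul _ _
  -- algebraic facts
  have hA2 : A * A = 0 := by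
    rw [hA, Finset.sum_mul_sum]
    refine Finset.sum_eq_zero fun k hk => Finset.sum_eq_zero fun k' hk' => ?_
    rw [Matrix.smul_mul, Matrix.mul_smul,
      Matrix.single_mul_single_of_ne (h := ne_of_gt ((memT k' |>.mp hk').2)),
      smul_zero, smul_zero]
  have hB2 : B * B = 0 := by
    rw [hB, Finset.sum_mul_sum]
    refine Finset.sum_eq_zero fun k hk => Finset.sum_eq_zero fun k' hk' => ?_
    rw [Matrix.smul_mul, Matrix.mul_smul,
      Matrix.single_mul_single_of_ne (h := ne_of_gt ((memT k |>.mp hk).1)),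
      smul_zero, smul_zero]
  have hBA : B * A = s • single i j 1 := by
    rw [hB, hA, Finset.sum_mul_sum, hs, Finset.sum_smul]
    refine Finset.sum_congr rfl fun k hk => ?_
    rw [Finset.sum_eq_single k]
    · simp [Matrix.smul_mul, Matrix.mul_smul, smul_smul]
    · intro k' hk' hne
      rw [Matrix.smul_mul, Matrix.mul_smul,
        Matrix.single_mul_single_of_ne (h := Ne.symm hne), smul_zero, smul_zero]
    · intro h; exact absurd hk h
  have hginv : ((1 + A) * (1 - B))⁻¹ = (1 + B) * (1 - A) := by
    apply Matrix.inv_eq_right_inv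
    have e1 : (1 - B) * (1 + B) = 1 := by
      rw [sub_mul, mul_add, mul_add, mul_one, hB2]
      simp only [one_mul, mul_one]
      abel
    calc (1 + A) * (1 - B) * ((1 + B) * (1 - A))
        = (1 + A) * ((1 - B) * (1 + B)) * (1 - A) := by
          rw [mul_assoc, mul_assoc, mul_assoc]
      _ = (1 + A) * (1 - A) := by rw [e1, mul_one]
      _ = 1 := by
          rw [add_mul, mul_sub, mul_sub, mul_one, hA2]
          simp only [one_mul, mul_one]
          abel
  -- entries of the right inverse h = (1+B)(1-A) = 1 + B - A - s•E_ij
  have hform : (1 + B) * (1 - A) = 1 + B - A - s • single i j 1 := by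
    rw [add_mul, mul_sub, mul_sub, mul_one, hBA]
    simp only [one_mul, mul_one]
    abel
  have hne_ij : i ≠ j := ne_of_lt hij
  have Aapply : ∀ p q : Fin n,
      A p q = if p ∈ Ioo i j ∧ q = j then f (single i p (1 : ℂ)) else 0 := by
    intro p q
    rw [hA, Matrix.sum_apply]
    by_cases hp : p ∈ Ioo i j ∧ q = j
    · obtain ⟨hp1, rfl⟩ := hp
      rw [Finset.sum_eq_single p]
      · simp [Matrix.smul_apply, hp1]
      · intro k hk hne
        rw [Matrix.smul_apply, Matrix.single_apply_of_ne (h := fun h => hne h.1),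
          smul_zero]
      · intro h; exact absurd hp1 h
    · rw [if_neg hp]
      refine Finset.sum_eq_zero fun k hk => ?_
      have hne : ¬ (k = p ∧ j = q) := by
        rintro ⟨rfl, rfl⟩; exact hp ⟨hk, rfl⟩
      simp [Matrix.smul_apply, Matrix.single_apply_of_ne (h := hne)]
  have Bapply : ∀ p q : Fin n,
      B p q = if p = i ∧ q ∈ Ioo i j then f (single q j (1 : ℂ)) else 0 := by
    intro p q
    rw [hB, Matrix.sum_apply]
    by_cases hp : p = i ∧ q ∈ Ioo i j
    · obtain ⟨rfl, hq⟩ := hp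
      rw [Finset.sum_eq_single q]
      · simp [Matrix.smul_apply, hq]
      · intro k hk hne
        rw [Matrix.smul_apply, Matrix.single_apply_of_ne (h := fun h => hne h.2),
          smul_zero]
      · intro h; exact absurd hq h
    · rw [if_neg hp]
      refine Finset.sum_eq_zero fun k hk => ?_
      have hne : ¬ (i = p ∧ k = q) := by
        rintro ⟨rfl, rfl⟩; exact hp ⟨rfl, hk⟩
      simp [Matrix.smul_apply, Matrix.single_apply_of_ne (h := hne)]
  have iT : i ∉ Ioo i j := by simp [memT]
  have jT : j ∉ Ioo i j := by simp [memT]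
  have hentry : ∀ a : Fin n, ((1 + B) * (1 - A)) i a =
      (if a = i then 1 else 0)
        + (if a ∈ Ioo i j then f (single a j (1 : ℂ)) else 0)
        - s * (if a = j then 1 else 0) := by
    intro a
    rw [hform]
    simp only [Matrix.sub_apply, Matrix.add_apply, Matrix.smul_apply, Matrix.one_apply,
      Aapply, Bapply, smul_eq_mul]
    have hAz : (if i ∈ Ioo i j ∧ a = j then f (single i i (1 : ℂ)) else 0) = 0 :=
      if_neg (fun h => iT h.1)
    rw [hAz, sub_zero]
    congr 1
    · congr 1
      · by_cases h : i = a
        · subst h; simp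
        · simp [h, Ne.symm h]
      · by_cases h : a ∈ Ioo i j
        · simp [h]
        · simp [h]
    · by_cases h : a = j
      · subst h; simp
      · have hne : ¬ (i = i ∧ j = a) := fun hh => h hh.2.symm
        simp [Matrix.single_apply_of_ne (h := hne), h]
  have gentry : ∀ b : Fin n, ((1 + A) * (1 - B)) b j =
      (if b = j then 1 else 0)
        + (if b ∈ Ioo i j then f (single i b (1 : ℂ)) else 0) := by
    intro b
    have hAB : A * B = 0 := by
      rw [hA, hB, Finset.sum_mul_sum]
      refine Finset.sum_eq_zero fun k hk => Finset.sum_eq_zero fun k' hk' => ?_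
      rw [Matrix.smul_mul, Matrix.mul_smul,
        Matrix.single_mul_single_of_ne (h := Ne.symm hne_ij), smul_zero, smul_zero]
    have gform : (1 + A) * (1 - B) = 1 + A - B - A * B := by
      rw [add_mul, mul_sub, mul_sub, mul_one]
      simp only [one_mul, mul_one]
      abel
    rw [gform, hAB, sub_zero]
    simp only [Matrix.sub_apply, Matrix.add_apply, Matrix.one_apply, Aapply, Bapply]
    have hBz : (if b = i ∧ j ∈ Ioo i j then f (single j j (1 : ℂ)) else 0) = 0 :=
      if_neg (fun h => jT h.2)
    rw [hBz, sub_zero]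
    simp
  -- the key pointwise identity
  have key : ∀ a b : Fin n, a < b →
      f (single a b (1 : ℂ)) =
        ((if a = i then 1 else 0)
            + (if a ∈ Ioo i j then f (single a j (1 : ℂ)) else 0)
            - s * (if a = j then 1 else 0)) *
        ((if b = j then 1 else 0)
            + (if b ∈ Ioo i j then f (single i b (1 : ℂ)) else 0)) := by
    intro a b hab
    by_cases hai : a = i
    · subst hai
      rw [if_pos rfl, if_neg iT, if_neg hne_ij]
      by_cases hbj : b = j
      · subst hbj
        rw [if_pos rfl, if_neg jT, h1]; ring
      · by_cases hbT : b ∈ Ioo a j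
        · rw [if_neg hbj, if_pos hbT]; ring
        · rw [if_neg hbj, if_neg hbT]
          rw [h3 a b hab (fun h => hbj (congrArg Prod.snd h)) (by
              rintro ⟨-, hb1, hb2⟩; exact hbT ((memT b).mpr ⟨hb1, hb2⟩))
            (fun h => hbj h.1) (fun h => (lt_irrefl a h.1))]
          ring
    · by_cases haT : a ∈ Ioo i j
      · obtain ⟨ha1, ha2⟩ := (memT a).mp haT
        rw [if_neg hai, if_pos haT, if_neg (ne_of_lt ha2)]
        by_cases hbj : b = j
        · subst hbj
          rw [if_pos rfl, if_neg jT]; ring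
        · by_cases hbT : b ∈ Ioo i j
          · obtain ⟨hb1, hb2⟩ := (memT b).mp hbT
            rw [if_neg hbj, if_pos hbT, h2 a b ha1 hab hb2]; ring
          · rw [if_neg hbj, if_neg hbT]
            rw [h3 a b hab (fun h => hai (congrArg Prod.fst h)) (fun h => hai h.1)
              (fun h => hbj h.1)
              (fun h => hbT ((memT b).mpr ⟨h.1.trans h.2.1, h.2.2⟩))]
            ring
      · rw [if_neg hai, if_neg haT]
        by_cases haj : a = j
        · subst haj
          have hbj : b ≠ a := ne_of_gt hab
          rw [if_pos rfl, if_neg hbj, if_neg (fun h => lt_asymm hab ((memT b).mp h).2)]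
          rw [h3 a b hab (fun h => hai (congrArg Prod.fst h)) (fun h => hai h.1)
            (fun h => hbj h.1) (fun h => lt_asymm h.2.1 h.2.2)]
          ring
        · rw [if_neg haj]
          rw [h3 a b hab (fun h => hai (congrArg Prod.fst h)) (fun h => hai h.1)
            (fun h => haT ((memT a).mpr ⟨h.2.1, h.2.2⟩))
            (fun h => haT ((memT a).mpr ⟨h.1, h.2.1.trans h.2.2⟩))]
          ring
  -- assemble
  show f x = ((((((Ioo i j).sort (· ≤ ·)).map fun k =>
            (1 + f (single i k (1 : ℂ)) • single k j (1 : ℂ))).prod) *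
          ((((Ioo i j).sort (· ≤ ·)).map fun k =>
            (1 - f (single k j (1 : ℂ)) • single i k (1 : ℂ))).prod))⁻¹ * x *
          (((((Ioo i j).sort (· ≤ ·)).map fun k =>
            (1 + f (single i k (1 : ℂ)) • single k j (1 : ℂ))).prod) *
          ((((Ioo i j).sort (· ≤ ·)).map fun k =>
            (1 - f (single k j (1 : ℂ)) • single i k (1 : ℂ))).prod))) i j
  rw [prodA, prodB, ← sub_eq_add_neg, hginv]
  have lhs : f x = ∑ a : Fin n, ∑ b : Fin n, x a b * f (single a b (1 : ℂ)) := by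
    conv_lhs => rw [matrix_eq_sum_single x]
    rw [map_sum]
    refine Finset.sum_congr rfl fun a _ => ?_
    rw [map_sum]
    refine Finset.sum_congr rfl fun b _ => ?_
    have e : single a b (x a b) = x a b • single a b (1 : ℂ) := by
      rw [Matrix.smul_single, smul_eq_mul, mul_one]
    rw [e, _root_.map_smul, smul_eq_mul]
  rw [lhs]
  rw [Matrix.mul_apply]
  rw [Finset.sum_comm]
  refine Finset.sum_congr rfl fun b _ => ?_
  rw [Matrix.mul_apply, Finset.sum_mul]
  refine Finset.sum_congr rfl fun a _ => ?_
  by_cases hab : a < b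
  · rw [key a b hab, hentry, gentry]; ring
  · rw [hx a b (not_lt.mp hab)]
    ring
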